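/- Let σ be a 2×2 Hermitian complex matrix. Then its robustness of imaginarity in the x-basis equals |Re Tr(σ·σy)| and its robustness of imaginarity in the y-basis equals |Re Tr(σ·σx)|, i.e. 𝓘ˣ(σ) = |Re Tr(σ·σy)| and 𝓘ʸ(σ) = |Re Tr(σ·σx)|. -/

import Mathlib

open Matrix Kronecker
open scoped ComplexOrder

/-- Trace norm of a square complex matrix: `Tr[sqrt(Aᴴ A)]`. -/
noncomputable def traceNorm {n : Type*} [Fintype n] [DecidableEq n]
    (A : Matrix n n ℂ) : ℝ :=
  (((Matrix.posSemidef_conjTranspose_mul_self A).1.eigenvectorUnitary.1 *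
      diagonal ((fun x : ℝ => (x : ℂ)) ∘ (Real.sqrt ∘ (Matrix.posSemidef_conjTranspose_mul_self A).1.eigenvalues)) *
      (star (Matrix.posSemidef_conjTranspose_mul_self A).1.eigenvectorUnitary : Matrix n n ℂ)).trace).re

/-- Robustness of imaginarity: `(1/2) ‖ρ - ρᵀ‖₁`. -/
noncomputable def roi {n : Type*} [Fintype n] [DecidableEq n]
    (ρ : Matrix n n ℂ) : ℝ :=
  (1 / 2) * traceNorm (ρ - ρ.transpose)

def σx : Matrix (Fin 2) (Fin 2) ℂ := !![0, 1; 1, 0]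
def σy : Matrix (Fin 2) (Fin 2) ℂ := !![0, -Complex.I; Complex.I, 0]

/-- Hadamard matrix (x-basis change). -/
noncomputable def Hm : Matrix (Fin 2) (Fin 2) ℂ :=
  (Real.sqrt 2 : ℂ)⁻¹ • !![1, 1; 1, -1]
/-- Eigenvector matrix of σy (y-basis change). -/
noncomputable def Vm : Matrix (Fin 2) (Fin 2) ℂ :=
  (Real.sqrt 2 : ℂ)⁻¹ • !![1, 1; Complex.I, -Complex.I]

/-- Robustness of imaginarity in the x-basis. -/
noncomputable def roiX (σ : Matrix (Fin 2) (Fin 2) ℂ) : ℝ := roi (Hm * σ * Hm)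
/-- Robustness of imaginarity in the y-basis. -/
noncomputable def roiY (σ : Matrix (Fin 2) (Fin 2) ℂ) : ℝ := roi (Vmᴴ * σ * Vm)

lemma traceNorm_skew (c : ℂ) : traceNorm !![0, c; -c, 0] = 2 * ‖c‖ := by
  set A : Matrix (Fin 2) (Fin 2) ℂ := !![0, c; -c, 0] with hA
  have hM : Aᴴ * A = ((‖c‖ ^ 2 : ℝ) : ℂ) • (1 : Matrix (Fin 2) (Fin 2) ℂ) := by
    ext i j
    fin_cases i <;> fin_cases j <;>
      simp [hA, Matrix.mul_apply, Fin.sum_univ_two, Complex.conj_mul', Complex.normSq_eq_norm_sq]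
  have hH := (Matrix.posSemidef_conjTranspose_mul_self A).1
  have hev : ∀ i, hH.eigenvalues i = ‖c‖ ^ 2 := by
    intro i
    have e := hH.eigenvalues_eq i
    have hv := hH.eigenvectorBasis.orthonormal.1 i
    generalize hH.eigenvalues i = l at e ⊢
    generalize hH.eigenvectorBasis i = v at e hv
    rw [hM, Matrix.smul_mulVec, Matrix.one_mulVec, dotProduct_smul] at e
    have hvv : star ⇑v ⬝ᵥ ⇑v = (1 : ℂ) := by
      rw [dotProduct_comm, ← EuclideanSpace.inner_eq_star_dotProduct, inner_self_eq_norm_sq_to_K, hv]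
      simp
    rw [e, hvv, smul_eq_mul, mul_one]
    exact Complex.ofReal_re _
  rw [traceNorm, Matrix.trace_mul_cycle, Unitary.coe_star_mul_self, one_mul, Matrix.trace_diagonal]
  simp [Fin.sum_univ_two, hev, Real.sqrt_sq (norm_nonneg c)]

lemma roi_two (ρ : Matrix (Fin 2) (Fin 2) ℂ) :
    roi ρ = ‖ρ 0 1 - ρ 1 0‖ := by
  have h : ρ - ρ.transpose = !![0, ρ 0 1 - ρ 1 0; -(ρ 0 1 - ρ 1 0), 0] := by
    ext i j
    fin_cases i <;> fin_cases j <;> simp [Matrix.transpose_apply]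
  rw [roi, h, traceNorm_skew]
  ring

/-- For a 2×2 Hermitian matrix, `𝓘ˣ(σ) = |Re Tr(σ·σy)|` and
`𝓘ʸ(σ) = |Re Tr(σ·σx)|`. -/
theorem stmt2 (σ : Matrix (Fin 2) (Fin 2) ℂ) (hσ : σ.IsHermitian) :
    roiX σ = |((σ * σy).trace).re| ∧ roiY σ = |((σ * σx).trace).re| := by
  have h10 : σ 1 0 = (starRingEnd ℂ) (σ 0 1) := by
    conv_lhs => rw [← hσ]
    simp [Matrix.conjTranspose_apply]
  have hk : ((Real.sqrt 2 : ℝ) : ℂ) ≠ 0 := by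
    simp [Real.sqrt_eq_zero']
  have h2 : ((Real.sqrt 2 : ℝ) : ℂ) * ((Real.sqrt 2 : ℝ) : ℂ) = 2 := by
    norm_cast
    exact Real.mul_self_sqrt (by norm_num)
  constructor
  · rw [roiX, roi_two]
    have hx : (Hm * σ * Hm) 0 1 - (Hm * σ * Hm) 1 0 = σ 1 0 - σ 0 1 := by
      simp only [Hm, Matrix.mul_apply, Fin.sum_univ_two, Matrix.smul_apply,
        Matrix.cons_val', Matrix.cons_val_zero, Matrix.cons_val_one, Matrix.head_cons,
        Matrix.empty_val', Matrix.cons_val_fin_one, Matrix.head_fin_const, smul_eq_mul, Matrix.of_apply]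
      field_simp
      ring_nf
      rw [sq, h2]
    rw [hx, h10]
    have htr : ((σ * σy).trace).re = -(2 * (σ 0 1).im) := by
      simp [Matrix.trace, Matrix.mul_apply, Fin.sum_univ_two, σy, h10,
        Complex.mul_re, Complex.mul_im]
      ring
    have hlhs : (starRingEnd ℂ) (σ 0 1) - σ 0 1 = (↑(-(2 * (σ 0 1).im)) : ℂ) * Complex.I := by
      apply Complex.ext <;> simp <;> ring
    rw [hlhs, htr, norm_mul, Complex.norm_real, Complex.norm_I, mul_one, Real.norm_eq_abs]
  · rw [roiY, roi_two]
    have hy : (Vmᴴ * σ * Vm) 0 1 - (Vmᴴ * σ * Vm) 1 0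
        = -Complex.I * (σ 0 1 + σ 1 0) := by
      simp only [Vm, Matrix.conjTranspose_apply, Matrix.mul_apply, Fin.sum_univ_two,
        Matrix.smul_apply, Matrix.cons_val', Matrix.cons_val_zero, Matrix.cons_val_one,
        Matrix.head_cons, Matrix.empty_val', Matrix.cons_val_fin_one, Matrix.head_fin_const,
        smul_eq_mul, star_mul', star_one, Complex.conj_ofReal, star_neg, Matrix.of_apply,
        Complex.conj_I]
      field_simp
      ring_nf
      simp only [Complex.star_def, map_inv₀, Complex.conj_ofReal, Complex.conj_I]
      rw [← h2]
      field_simp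
    rw [hy, h10]
    have htr : ((σ * σx).trace).re = 2 * (σ 0 1).re := by
      simp [Matrix.trace, Matrix.mul_apply, Fin.sum_univ_two, σx, h10,
        Complex.mul_re, Complex.mul_im]
      ring
    have hlhs : σ 0 1 + (starRingEnd ℂ) (σ 0 1) = (↑(2 * (σ 0 1).re) : ℂ) := by
      apply Complex.ext <;> simp <;> ring
    rw [hlhs, htr, norm_mul, norm_neg, Complex.norm_I, one_mul, Complex.norm_real, Real.norm_eq_abs]
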